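/- arXiv:1004.3246 — 2 statements merged into one kernel-verified Lean document; each statement's English description precedes it below -/
import Mathlib

section
/- Let φ be a CNF formula over the propositional variables X_1, …, X_k. Then there exists a deterministic finite automaton A over the two-letter alphabet {0, 1} such that for every word w = w_1 … w_k ∈ {0, 1}^k of length k: w is a reset word for A if and only if the assignment α_w, defined by α_w(X_j) = true ⟺ w_j = 1, satisfies φ. -/
/-- The extension `δ*` of a transition function `δ` to words. -/
def deltaStar {Q A : Type*} (δ : Q → A → Q) (q : Q) (w : List A) : Q :=
  w.foldl δ q

/-- A word `w` is a reset word for the automaton with transition function `δ`. -/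
def IsResetWord {Q A : Type*} (δ : Q → A → Q) (w : List A) : Prop :=
  ∃ p : Q, ∀ q : Q, deltaStar δ q w = p

/-- A clause over variables `X_1, …, X_k` is a finite set of literals; the literal
`(j, true)` stands for `X_j`, and `(j, false)` for `¬X_j`. -/
abbrev Clause (k : ℕ) := Finset (Fin k × Bool)

/-- An assignment satisfies a clause if it makes at least one of its literals true. -/
def SatClause {k : ℕ} (α : Fin k → Bool) (C : Clause k) : Prop :=
  ∃ l ∈ C, α l.1 = l.2

/-- An assignment satisfies a CNF formula if it satisfies every clause. -/
def SatCNF {n k : ℕ} (α : Fin k → Bool) (φ : Fin n → Clause k) : Prop :=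
  ∀ i : Fin n, SatClause α (φ i)

namespace EppsteinAux

variable {n k : ℕ}

/-- The state type: `none` is the sink, `some (i, j)` tracks clause `i` at position `j`. -/
abbrev S (n k : ℕ) := Option (Fin n × Fin (k+1))

/-- The transition function of the reduction automaton. -/
def trans (φ : Fin n → Clause k) : S n k → Bool → S n k
  | none, _ => none
  | some (i, j), b =>
    if h : j.val < k then
      if (⟨j.val, h⟩, b) ∈ φ i then none else some (i, ⟨j.val + 1, by omega⟩)
    else none

lemma trans_none (φ : Fin n → Clause k) (b : Bool) : trans φ none b = none := rfl

lemma trans_some (φ : Fin n → Clause k) (i : Fin n) (j : Fin (k+1)) (b : Bool) :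
    trans φ (some (i, j)) b =
      if h : j.val < k then
        if (⟨j.val, h⟩, b) ∈ φ i then none else some (i, ⟨j.val + 1, by omega⟩)
      else none := rfl

lemma deltaStar_cons {Q A : Type*} (δ : Q → A → Q) (q : Q) (b : A) (w : List A) :
    deltaStar δ q (b :: w) = deltaStar δ (δ q b) w := rfl

lemma deltaStar_none (φ : Fin n → Clause k) (w : List Bool) :
    deltaStar (trans φ) none w = none := by
  induction w with
  | nil => rfl
  | cons b w ih => rw [deltaStar_cons, trans_none]; exact ih

/-- Claim B: states beyond position `k - |w|` all reach the sink. -/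
lemma deltaStar_over (φ : Fin n → Clause k) :
    ∀ (w : List Bool) (i : Fin n) (j : Fin (k+1)), k - j.val < w.length →
      deltaStar (trans φ) (some (i, j)) w = none := by
  intro w
  induction w with
  | nil => intro i j hj; simp only [List.length_nil] at hj; omega
  | cons b w ih =>
    intro i j hj
    simp only [List.length_cons] at hj
    rw [deltaStar_cons, trans_some]
    by_cases h : j.val < k
    · rw [dif_pos h]
      by_cases hm : (⟨j.val, h⟩, b) ∈ φ i
      · rw [if_pos hm]; exact deltaStar_none φ w
      · rw [if_neg hm]
        apply ih
        simp only
        omega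
    · rw [dif_neg h]; exact deltaStar_none φ w

/-- Claim C: a tracking state ends at the sink iff some literal along the way hits. -/
lemma deltaStar_track (φ : Fin n → Clause k) :
    ∀ (w : List Bool) (i : Fin n) (j : Fin (k+1)), j.val + w.length ≤ k →
      (deltaStar (trans φ) (some (i, j)) w = none ↔
        ∃ t, ∃ ht : t < w.length, ∃ hk : j.val + t < k,
          (⟨j.val + t, hk⟩, w.get ⟨t, ht⟩) ∈ φ i) := by
  intro w
  induction w with
  | nil =>
    intro i j hj
    simp [deltaStar]
  | cons b w ih =>
    intro i j hj
    simp only [List.length_cons] at hj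
    have hjk : j.val < k := by omega
    rw [deltaStar_cons, trans_some, dif_pos hjk]
    by_cases hm : (⟨j.val, hjk⟩, b) ∈ φ i
    · rw [if_pos hm]
      constructor
      · intro _
        refine ⟨0, by simp, by omega, ?_⟩
        simpa using hm
      · intro _; exact deltaStar_none φ w
    · rw [if_neg hm]
      rw [ih i ⟨j.val + 1, by omega⟩ (by simp only; omega)]
      constructor
      · rintro ⟨t, ht, hk', hmem⟩
        simp only at hk'
        refine ⟨t + 1, by simp only [List.length_cons]; omega, by omega, ?_⟩
        convert hmem using 2
        exact Fin.ext (by simp only [Fin.val_mk]; omega)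
        rfl
      · rintro ⟨t, ht, hk', hmem⟩
        rcases t with _ | t
        · exact absurd (by simpa using hmem) hm
        · simp only [List.length_cons] at ht
          refine ⟨t, by omega, by simp only; omega, ?_⟩
          convert hmem using 2
          exact Fin.ext (by simp only [Fin.val_mk]; omega)
          rfl

lemma deltaStar_equiv {Q Q' A : Type*} (e : Q ≃ Q') (δ : Q → A → Q)
    (w : List A) (q : Q) :
    deltaStar (fun s b => e (δ (e.symm s) b)) (e q) w = e (deltaStar δ q w) := by
  induction w generalizing q with
  | nil => rfl
  | cons b w ih =>
    simp only [deltaStar_cons, Equiv.symm_apply_apply]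
    exact ih (δ q b)

end EppsteinAux

open EppsteinAux in
/-- Eppstein's reduction: from a CNF formula `φ` over variables `X_1, …, X_k` one obtains
a DFA over `{0,1}` such that a word `w ∈ {0,1}^k` is a reset word iff the corresponding
assignment (`X_j` is true iff `w_j = 1`) satisfies `φ`. -/
theorem eppstein_reduction (n k : ℕ) (φ : Fin n → Clause k) :
    ∃ (N : ℕ) (δ : Fin N → Bool → Fin N),
      ∀ (w : List Bool) (h : w.length = k),
        IsResetWord δ w ↔ SatCNF (fun j : Fin k => w.get (Fin.cast h.symm j)) φ := by
  classical
  let e : S n k ≃ Fin (Fintype.card (S n k)) := Fintype.equivFin (S n k)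
  refine ⟨Fintype.card (S n k), fun s b => e (trans φ (e.symm s) b), ?_⟩
  intro w h
  have key : ∀ q : S n k,
      deltaStar (fun s b => e (trans φ (e.symm s) b)) (e q) w = e (deltaStar (trans φ) q w) :=
    fun q => deltaStar_equiv e (trans φ) w q
  constructor
  · rintro ⟨p, hp⟩ i
    have hnone : p = e none := by
      rw [← hp (e none), key none, deltaStar_none]
    have h0 : deltaStar (trans φ) (some (i, ⟨0, by omega⟩)) w = none := by
      have hx := hp (e (some (i, ⟨0, by omega⟩)))
      rw [key, hnone] at hx
      exact e.injective hx
    rw [deltaStar_track φ w i ⟨0, by omega⟩ (by simp [h])] at h0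
    obtain ⟨t, ht, hk', hmem⟩ := h0
    simp only [Nat.zero_add] at hk' hmem
    refine ⟨(⟨t, hk'⟩, w.get ⟨t, ht⟩), hmem, rfl⟩
  · intro hsat
    refine ⟨e none, ?_⟩
    intro q
    rw [← e.apply_symm_apply q, key]
    congr 1
    rcases hq : e.symm q with _ | ⟨i, j⟩
    · exact deltaStar_none φ w
    · rcases Nat.eq_zero_or_pos j.val with hj0 | hjpos
      · obtain ⟨l, hl, hlb⟩ := hsat i
        rw [deltaStar_track φ w i j (by omega)]
        have hlk : l.1.val < k := l.1.isLt
        refine ⟨l.1.val, by omega, by omega, ?_⟩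
        have : (⟨j.val + l.1.val, by omega⟩ : Fin k) = l.1 := by
          apply Fin.ext; simp only; omega
        rw [this]
        have : w.get ⟨l.1.val, by omega⟩ = l.2 := by
          rw [← hlb]; rfl
        rw [this]
        exact hl
      · apply deltaStar_over
        have : j.val ≤ k := by omega
        omega
end

section
/- Let φ be a CNF formula over the propositional variables X_1, …, X_k. Then there exists a deterministic finite automaton A over the two-letter alphabet {0, 1} such that the number of words w ∈ {0, 1}^k of length k that are reset words for A equals the number of assignments α : {X_1, …, X_k} → {true, false} that satisfy φ. -/
section Construction

variable {n k : ℕ}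

/-- states: `none` = sink, `some none` = fail, `some (some (i,j))` = clause `i`, position `j`. -/
abbrev Qt (n k : ℕ) := Option (Option (Fin n × Fin k))

def dstep (φ : Fin n → Clause k) : Qt n k → Bool → Qt n k
  | none, _ => none
  | some none, _ => none
  | some (some (i, j)), b =>
    if (j, b) ∈ φ i then none
    else if h : j.val + 1 < k then some (some (i, ⟨j.val + 1, h⟩)) else some none

lemma deltaStar_cons {Q A : Type*} (δ : Q → A → Q) (q : Q) (a : A) (t : List A) :
    deltaStar δ q (a :: t) = deltaStar δ (δ q a) t := rfl

lemma sink_run (φ : Fin n → Clause k) : ∀ w, deltaStar (dstep φ) none w = none := by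
  intro w; induction w with
  | nil => rfl
  | cons a t ih => rw [deltaStar_cons]; exact ih

lemma fail_run (φ : Fin n → Clause k) (a : Bool) (t : List Bool) :
    deltaStar (dstep φ) (some none) (a :: t) = none := by
  rw [deltaStar_cons]; exact sink_run φ t

lemma overshoot_run (φ : Fin n → Clause k) :
    ∀ (w : List Bool) (i : Fin n) (j : Fin k), k + 1 ≤ j.val + w.length →
      deltaStar (dstep φ) (some (some (i, j))) w = none := by
  intro w
  induction w with
  | nil => intro i j h; exact absurd h (by have := j.isLt; simp only [List.length_nil]; omega)
  | cons a t ih =>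
    intro i j h
    rw [deltaStar_cons]
    by_cases hm : (j, a) ∈ φ i
    · simp only [dstep, hm, if_true]; exact sink_run φ t
    · simp only [dstep, hm, if_false]
      by_cases h2 : j.val + 1 < k
      · simp only [h2, dif_pos]
        exact ih i ⟨j.val + 1, h2⟩ (by simp at h ⊢; omega)
      · simp only [h2, dif_neg]
        have : 1 ≤ t.length := by have := j.isLt; simp at h; omega
        obtain ⟨b, t', rfl⟩ : ∃ b t', t = b :: t' := by
          cases t with
          | nil => simp at this
          | cons b t' => exact ⟨b, t', rfl⟩
        exact fail_run φ b t'

lemma run_eq_none (φ : Fin n → Clause k) (i : Fin n) :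
    ∀ (w : List Bool) (j : Fin k), w.length = k - j.val →
      (deltaStar (dstep φ) (some (some (i, j))) w = none ↔
        ∃ m : ℕ, ∃ hm : j.val + m < k, (⟨j.val + m, hm⟩, w.getD m false) ∈ φ i) := by
  intro w
  induction w with
  | nil =>
    intro j hw
    have := j.isLt
    simp at hw; omega
  | cons a t ih =>
    intro j hw
    rw [deltaStar_cons]
    by_cases hm : (j, a) ∈ φ i
    · simp only [dstep, hm, if_true]
      constructor
      · intro _
        exact ⟨0, by simpa using j.isLt, by simpa using hm⟩
      · intro _; exact sink_run φ t
    · simp only [dstep, hm, if_false]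
      by_cases h2 : j.val + 1 < k
      · simp only [h2, dif_pos]
        rw [ih ⟨j.val + 1, h2⟩ (by simp at hw ⊢; omega)]
        constructor
        · rintro ⟨m, hmk, hmem⟩
          refine ⟨m + 1, by simp at hmk ⊢; omega, ?_⟩
          have : (⟨j.val + (m + 1), by simp at hmk; omega⟩ : Fin k) = ⟨j.val + 1 + m, hmk⟩ := by
            simp; omega
          rw [this]
          simpa using hmem
        · rintro ⟨m, hmk, hmem⟩
          cases m with
          | zero =>
            exfalso
            apply hm
            have : (⟨j.val + 0, hmk⟩ : Fin k) = j := by simp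
            rw [this] at hmem
            simpa using hmem
          | succ m' =>
            refine ⟨m', by simp; omega, ?_⟩
            have : (⟨(j.val + 1) + m', by omega⟩ : Fin k) = ⟨j.val + (m' + 1), hmk⟩ := by
              simp; omega
            rw [this]
            simpa using hmem
      · -- j.val + 1 = k, so t = []
        simp only [h2, dif_neg]
        have hj : j.val + 1 = k := by have := j.isLt; omega
        have ht : t = [] := by
          simp at hw
          exact List.length_eq_zero_iff.mp (by omega)
        subst ht
        constructor
        · intro h; exact absurd h (by simp [deltaStar])
        · rintro ⟨m, hmk, hmem⟩
          exfalso
          have hm0 : m = 0 := by omega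
          subst hm0
          apply hm
          have : (⟨j.val + 0, hmk⟩ : Fin k) = j := by simp
          rw [this] at hmem
          simpa using hmem

lemma reset_iff (φ : Fin n → Clause k) (hnk : k ≠ 0 ∨ n ≠ 0) (w : List Bool)
    (hw : w.length = k) :
    IsResetWord (dstep φ) w ↔
      ∀ i, ∃ m : ℕ, ∃ hm : m < k, (⟨m, hm⟩, w.getD m false) ∈ φ i := by
  rcases Nat.eq_zero_or_pos k with hk | hk
  · subst hk
    have hw' : w = [] := List.length_eq_zero_iff.mp hw
    subst hw'
    constructor
    · rintro ⟨p, hp⟩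
      exfalso
      have h1 : (none : Qt n 0) = p := hp none
      have h2 : (some none : Qt n 0) = p := hp (some none)
      rw [← h2] at h1; cases h1
    · intro h
      rcases hnk with hk0 | hn0
      · exact absurd rfl hk0
      · obtain ⟨i⟩ : Nonempty (Fin n) := ⟨⟨0, Nat.pos_of_ne_zero hn0⟩⟩
        obtain ⟨m, hm, _⟩ := h i
        exact absurd hm (by omega)
  · obtain ⟨a, t, rfl⟩ : ∃ a t, w = a :: t := by
      cases w with
      | nil => simp at hw; omega
      | cons a t => exact ⟨a, t, rfl⟩
    constructor
    · rintro ⟨p, hp⟩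
      have hpn : p = none := by rw [← hp none]; exact sink_run φ _
      subst hpn
      intro i
      have h0 : (⟨0, hk⟩ : Fin k).val = 0 := rfl
      have := (run_eq_none φ i (a :: t) ⟨0, hk⟩ (by simp at hw ⊢; omega)).mp
        (hp (some (some (i, ⟨0, hk⟩))))
      obtain ⟨m, hmk, hmem⟩ := this
      refine ⟨m, by simpa using hmk, ?_⟩
      convert hmem using 2
      ext
      simp
    · intro h
      refine ⟨none, ?_⟩
      intro q
      match q with
      | none => exact sink_run φ _
      | some none => exact fail_run φ a t
      | some (some (i, j)) =>
        rcases Nat.eq_zero_or_pos j.val with hj | hj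
        · have hj' : j = ⟨0, hk⟩ := by ext; simpa using hj
          subst hj'
          rw [run_eq_none φ i (a :: t) ⟨0, hk⟩ (by simp at hw ⊢; omega)]
          obtain ⟨m, hmk, hmem⟩ := h i
          refine ⟨m, by simpa using hmk, ?_⟩
          convert hmem using 2
          ext; simp
        · exact overshoot_run φ (a :: t) i j (by simp at hw ⊢; omega)

end Construction

/-- A parsimonious reduction from #SAT: for every CNF formula `φ` over `X_1, …, X_k`
there is a DFA over `{0,1}` whose number of reset words of length `k` equals the number
of satisfying assignments of `φ`. -/
theorem counting_reset_words (n k : ℕ) (φ : Fin n → Clause k) :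
    ∃ (N : ℕ) (δ : Fin N → Bool → Fin N),
      Nat.card {w : List Bool // w.length = k ∧ IsResetWord δ w} =
        Nat.card {α : Fin k → Bool // SatCNF α φ} := by
  by_cases htriv : k = 0 ∧ n = 0
  · obtain ⟨hk, hn⟩ := htriv
    subst hk; subst hn
    refine ⟨1, fun _ _ => 0, ?_⟩
    apply Nat.card_congr
    exact
      { toFun := fun _ => ⟨fun i => i.elim0, fun i => i.elim0⟩
        invFun := fun _ => ⟨[], rfl, ⟨0, fun q => Subsingleton.elim _ _⟩⟩
        left_inv := by
          rintro ⟨w, hw, _⟩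
          apply Subtype.ext
          exact (List.length_eq_zero_iff.mp hw).symm
        right_inv := fun α => Subtype.ext (funext fun i => i.elim0) }
  · have hnk : k ≠ 0 ∨ n ≠ 0 := by tauto
    set N := Fintype.card (Qt n k) with hN
    let e : Qt n k ≃ Fin N := Fintype.equivFin _
    let δ : Fin N → Bool → Fin N := fun q b => e (dstep φ (e.symm q) b)
    have conj : ∀ (w : List Bool) (q : Qt n k),
        deltaStar δ (e q) w = e (deltaStar (dstep φ) q w) := by
      intro w
      induction w with
      | nil => intro q; rfl
      | cons a t ih =>
        intro q
        rw [deltaStar_cons, deltaStar_cons]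
        have : δ (e q) a = e (dstep φ q a) := by simp [δ]
        rw [this]
        exact ih _
    have conj_reset : ∀ w, IsResetWord δ w ↔ IsResetWord (dstep φ) w := by
      intro w
      constructor
      · rintro ⟨p, hp⟩
        refine ⟨e.symm p, fun q => e.injective ?_⟩
        rw [← conj w q, hp (e q), Equiv.apply_symm_apply]
      · rintro ⟨p, hp⟩
        refine ⟨e p, fun q => ?_⟩
        have := conj w (e.symm q)
        rw [Equiv.apply_symm_apply] at this
        rw [this, hp]
    refine ⟨N, δ, ?_⟩
    apply Nat.card_congr
    refine
      { toFun := fun w => ⟨fun j => w.1.getD j.val false, ?_⟩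
        invFun := fun α => ⟨List.ofFn α.1, ?_, ?_⟩
        left_inv := ?_
        right_inv := ?_ }
    · -- SatCNF
      obtain ⟨w, hw, hr⟩ := w
      intro i
      obtain ⟨m, hm, hmem⟩ := (reset_iff φ hnk w hw).mp ((conj_reset w).mp hr) i
      exact ⟨(⟨m, hm⟩, w.getD m false), hmem, rfl⟩
    · simp
    · rw [conj_reset]
      rw [reset_iff φ hnk _ (by simp)]
      intro i
      obtain ⟨l, hl, hval⟩ := α.2 i
      refine ⟨l.1.val, l.1.isLt, ?_⟩
      have : (List.ofFn α.1).getD l.1.val false = α.1 l.1 := by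
        rw [List.getD_eq_getElem _ _ (by simp [l.1.isLt])]
        simp
      rw [this, hval]
      simpa using hl
    · rintro ⟨w, hw, hr⟩
      apply Subtype.ext
      simp only
      apply List.ext_getElem (by simp [hw])
      intro i h1 h2
      simp only [List.getElem_ofFn]
      rw [List.getD_eq_getElem _ _ (by omega)]
    · rintro ⟨α, hα⟩
      apply Subtype.ext
      funext j
      simp only
      rw [List.getD_eq_getElem _ _ (by simp [j.isLt])]
      simp
end
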